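/- Let π : A → B(H) be non-degenerate with WE(π) ≠ ∅, φ ∈ WE(π) with minimal Stinespring dilation φ = V* ρ(·) V on K, and suppose φ = λφ₁ + (1−λ)φ₂ with φ₁, φ₂ ∈ WE(π), 0 < λ < 1. Writing λφ₁ = V* T ρ(·) V with T ∈ ρ(B(H))', 0 ≤ T ≤ 1_K, via Arveson's Radon–Nikodym theorem, the compression of T to the closed subspace [ρ(π(A))VH] equals λ times the identity on that subspace: P T restricted to [ρ(π(A))VH] is λ·1. -/

import Mathlib

noncomputable section
open ContinuousLinearMap

/-- Complete positivity via matrix amplifications. -/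
def IsCPMap {A B : Type*} [NonUnitalRing A] [StarRing A] [Module ℂ A]
    [NonUnitalRing B] [StarRing B] [Module ℂ B] (φ : A →ₗ[ℂ] B) : Prop :=
  ∀ (n : ℕ) (a : Matrix (Fin n) (Fin n) A),
    (∃ b : Matrix (Fin n) (Fin n) A, a = star b * b) →
      ∃ c : Matrix (Fin n) (Fin n) B, a.map φ = star c * c

variable {A : Type*} [CStarAlgebra A]
variable {H K : Type*} [NormedAddCommGroup H] [InnerProductSpace ℂ H] [CompleteSpace H]
  [NormedAddCommGroup K] [InnerProductSpace ℂ K] [CompleteSpace K]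

/-- The set of weak expectations of a representation `π`. -/
def WeakExp (π : A →⋆ₐ[ℂ] (H →L[ℂ] H)) :
    Set ((H →L[ℂ] H) →ₗ[ℂ] (H →L[ℂ] H)) :=
  {θ | IsCPMap θ ∧ θ 1 = 1 ∧
    (∀ S, θ S ∈ Set.centralizer (Set.centralizer (Set.range (⇑π)))) ∧
    ∀ a, θ (π a) = π a}

/-- Non-degeneracy of a representation. -/
def Nondeg (π : A →⋆ₐ[ℂ] (H →L[ℂ] H)) : Prop :=
  (Submodule.span ℂ {x : H | ∃ a, ∃ h : H, π a h = x}).topologicalClosure = ⊤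

/-- The map `X ↦ V* (T ∘ X) V`, as a linear map. -/
def conjMap (V : H →L[ℂ] K) (T : K →L[ℂ] K) : (K →L[ℂ] K) →ₗ[ℂ] (H →L[ℂ] H) where
  toFun X := (adjoint V) ∘L (T ∘L (X ∘L V))
  map_add' X Y := by simp [add_comp, comp_add]
  map_smul' c X := by simp [smul_comp, comp_smul]


/-- writing `λφ₁ = V* T ρ(·) V` via Arveson's Radon–Nikodym theorem, the
compression of `T` to `[ρ(π(A))VH]` is `λ` times the identity of that subspace. -/
theorem compression_is_scalar
    (π : A →⋆ₐ[ℂ] (H →L[ℂ] H)) (hπ : Nondeg π) (hne : (WeakExp π).Nonempty)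
    (φ : (H →L[ℂ] H) →ₗ[ℂ] (H →L[ℂ] H)) (hφ : φ ∈ WeakExp π)
    (ρ : (H →L[ℂ] H) →⋆ₐ[ℂ] (K →L[ℂ] K)) (V : H →L[ℂ] K)
    (hdil : ∀ S, φ S = (adjoint V) ∘L ((ρ S) ∘L V))
    (hmin : (Submodule.span ℂ
      {x : K | ∃ S : H →L[ℂ] H, ∃ h : H, ρ S (V h) = x}).topologicalClosure = ⊤)
    (φ₁ φ₂ : (H →L[ℂ] H) →ₗ[ℂ] (H →L[ℂ] H)) (hφ₁ : φ₁ ∈ WeakExp π) (hφ₂ : φ₂ ∈ WeakExp π)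
    (l : ℝ) (hl0 : 0 < l) (hl1 : l < 1)
    (hconv : φ = (l : ℂ) • φ₁ + ((1 - l : ℝ) : ℂ) • φ₂)
    (T : K →L[ℂ] K) (hT : T ∈ Set.centralizer (Set.range (⇑ρ)))
    (hT0 : 0 ≤ T) (hT1 : T ≤ 1)
    (hTφ₁ : (conjMap V T).comp ρ.toLinearMap = (l : ℂ) • φ₁) :
    ∀ x ∈ (Submodule.span ℂ
        {x : K | ∃ a, ∃ h : H, ρ (π a) (V h) = x}).topologicalClosure,
    ∀ y ∈ (Submodule.span ℂ
        {x : K | ∃ a, ∃ h : H, ρ (π a) (V h) = x}).topologicalClosure,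
      (inner ℂ (T x) y : ℂ) = (l : ℂ) * (inner ℂ x y : ℂ) := by

  obtain ⟨-, -, -, hfix⟩ := hφ
  obtain ⟨-, -, -, hfix₁⟩ := hφ₁
  set s : Set K := {x : K | ∃ a, ∃ h : H, ρ (π a) (V h) = x} with hs
  have key : ∀ x ∈ s, ∀ y ∈ s, (inner ℂ (T x) y : ℂ) = (l : ℂ) * inner ℂ x y := by
    rintro _ ⟨a, h, rfl⟩ _ ⟨b, k, rfl⟩
    have hadj : adjoint (ρ (π b)) = ρ (π (star b)) := by
      rw [← ContinuousLinearMap.star_eq_adjoint, ← map_star, ← map_star]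
    have hcomm : ρ (π (star b)) * T = T * ρ (π (star b)) :=
      hT (ρ (π (star b))) ⟨π (star b), rfl⟩
    set c := star b * a with hc
    have hmul : ∀ z : K, ρ (π (star b)) (ρ (π a) z) = ρ (π c) z := by
      intro z
      rw [← ContinuousLinearMap.mul_apply, ← map_mul, ← map_mul]
    have hcommApp : ∀ z : K, ρ (π (star b)) (T z) = T (ρ (π (star b)) z) := by
      intro z
      rw [← ContinuousLinearMap.mul_apply, hcomm, ContinuousLinearMap.mul_apply]
    have hTc : (conjMap V T) (ρ (π c)) = (l : ℂ) • φ₁ (π c) := by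
      have := LinearMap.congr_fun hTφ₁ (π c)
      simpa using this
    have lhs : (inner ℂ (T (ρ (π a) (V h))) (ρ (π b) (V k)) : ℂ)
        = (l : ℂ) * inner ℂ ((π c) h) k := by
      calc (inner ℂ (T (ρ (π a) (V h))) (ρ (π b) (V k)) : ℂ)
          = inner ℂ (adjoint (ρ (π b)) (T (ρ (π a) (V h)))) (V k) :=
            (ContinuousLinearMap.adjoint_inner_left _ _ _).symm
        _ = inner ℂ (T (ρ (π c) (V h))) (V k) := by
            rw [hadj, hcommApp, hmul]
        _ = inner ℂ ((adjoint V) (T (ρ (π c) (V h)))) k :=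
            (ContinuousLinearMap.adjoint_inner_left _ _ _).symm
        _ = inner ℂ (((conjMap V T) (ρ (π c))) h) k := rfl
        _ = inner ℂ (((l : ℂ) • φ₁ (π c)) h) k := by rw [hTc]
        _ = (l : ℂ) * inner ℂ ((π c) h) k := by
            rw [hfix₁]
            rw [ContinuousLinearMap.smul_apply, inner_smul_left, Complex.conj_ofReal]
    have rhs : (inner ℂ (ρ (π a) (V h)) (ρ (π b) (V k)) : ℂ) = inner ℂ ((π c) h) k := by
      calc (inner ℂ (ρ (π a) (V h)) (ρ (π b) (V k)) : ℂ)
          = inner ℂ (adjoint (ρ (π b)) (ρ (π a) (V h))) (V k) :=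
            (ContinuousLinearMap.adjoint_inner_left _ _ _).symm
        _ = inner ℂ (ρ (π c) (V h)) (V k) := by rw [hadj, hmul]
        _ = inner ℂ ((adjoint V) (ρ (π c) (V h))) k :=
            (ContinuousLinearMap.adjoint_inner_left _ _ _).symm
        _ = inner ℂ ((φ (π c)) h) k := by rw [hdil (π c)]; rfl
        _ = inner ℂ ((π c) h) k := by rw [hfix]
    rw [lhs, rhs]
  have step1 : ∀ x ∈ s, ∀ y ∈ (Submodule.span ℂ s).topologicalClosure,
      (inner ℂ (T x) y : ℂ) = (l : ℂ) * inner ℂ x y := by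
    intro x hxs y hy
    have hspan : (Submodule.span ℂ s : Set K) ⊆
        {y : K | (inner ℂ (T x) y : ℂ) = (l : ℂ) * inner ℂ x y} := by
      intro y hy
      induction hy using Submodule.span_induction with
      | mem y hy => exact key x hxs y hy
      | zero => simp
      | add y z _ _ hy hz =>
          simp only [Set.mem_setOf_eq] at *
          rw [inner_add_right, inner_add_right, hy, hz]; ring
      | smul c y _ hy =>
          simp only [Set.mem_setOf_eq] at *
          rw [inner_smul_right, inner_smul_right, hy]; ring
    have hc : IsClosed {y : K | (inner ℂ (T x) y : ℂ) = (l : ℂ) * inner ℂ x y} :=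
      isClosed_eq (Continuous.inner continuous_const continuous_id)
        (continuous_const.mul (Continuous.inner continuous_const continuous_id))
    have hy' : y ∈ closure (Submodule.span ℂ s : Set K) := hy
    exact closure_minimal hspan hc hy'
  intro x hx y hy
  have hspan : (Submodule.span ℂ s : Set K) ⊆
      {x : K | (inner ℂ (T x) y : ℂ) = (l : ℂ) * inner ℂ x y} := by
    intro x hxm
    induction hxm using Submodule.span_induction with
    | mem x hxs => exact step1 x hxs y hy
    | zero => simp
    | add u v _ _ hu hv =>
        simp only [Set.mem_setOf_eq] at *
        rw [map_add, inner_add_left, inner_add_left, hu, hv]; ring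
    | smul c u _ hu =>
        simp only [Set.mem_setOf_eq] at *
        rw [map_smul, inner_smul_left, inner_smul_left, hu]; ring
  have hc : IsClosed {x : K | (inner ℂ (T x) y : ℂ) = (l : ℂ) * inner ℂ x y} :=
    isClosed_eq (Continuous.inner (T.continuous) continuous_const)
      (continuous_const.mul (Continuous.inner continuous_id continuous_const))
  have hx' : x ∈ closure (Submodule.span ℂ s : Set K) := hx
  exact closure_minimal hspan hc hx'
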